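/- Let $Q:\mathbb{R}^S\to\mathbb{R}^{S\times S}$ be locally Lipschitz with $Q_{ss}(\phi)=-\sum_{k\ne s}Q_{ks}(\phi)$ and $Q_{ks}(\phi)\ge 0$ for $k\ne s$ and all $\phi$ in the relevant domain. Consider the coupled system $\dot z_i(t) = Q(\rho_i(t))z_i(t)$, $\rho_i(t)=\frac{1}{\langle d\rangle}\sum_{j=1}^N a_{ij} z_j(t)$, for fixed nonnegative weights $a_{ij}$ and $\langle d\rangle>0$. If $z_i(0)\in\Delta$ for all $i$, then a global solution exists, is unique, and $z_i(t)\in\Delta$ for all $t\ge 0$ and all $i$. -/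

import Mathlib

open Finset

section Aux15

open NNReal Set Metric

private lemma locLip_lipschitzOnWith_of_isCompact15 {α β : Type*} [MetricSpace α] [MetricSpace β]
    {f : α → β} (hf : LocallyLipschitz f) {s : Set α} (hs : IsCompact s) :
    ∃ K : ℝ≥0, LipschitzOnWith K f s := by
  have hcont := hf.continuous
  choose K U hU hlip using hf
  have hUo : ∀ x, x ∈ interior (U x) := fun x => mem_interior_iff_mem_nhds.2 (hU x)
  obtain ⟨D0, hD0⟩ : ∃ C : ℝ, ∀ ⦃x⦄, x ∈ f '' s → ∀ ⦃y⦄, y ∈ f '' s → dist x y ≤ C :=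
    Metric.isBounded_iff.mp (hs.image hcont).isBounded
  set D : ℝ := max D0 0 with hD
  have hDist : ∀ x ∈ s, ∀ y ∈ s, dist (f x) (f y) ≤ D := fun x hx y hy =>
    le_trans (hD0 (mem_image_of_mem f hx) (mem_image_of_mem f hy)) (le_max_left _ _)
  obtain ⟨t, ht⟩ := hs.elim_finite_subcover (fun x => interior (U x))
    (fun _ => isOpen_interior) (fun x hx => mem_iUnion.2 ⟨x, hUo x⟩)
  have htcov : s ⊆ ⋃ i : t, interior (U i) := by
    intro x hx
    obtain ⟨i, hi, hxi⟩ := mem_iUnion₂.1 (ht hx)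
    exact mem_iUnion.2 ⟨⟨i, hi⟩, hxi⟩
  obtain ⟨δ, hδ, hleb⟩ := lebesgue_number_lemma_of_metric hs
    (fun _ : t => isOpen_interior) htcov
  set Km : ℝ≥0 := t.sup K with hKm
  refine ⟨Km + Real.toNNReal (D / δ), ?_⟩
  rw [lipschitzOnWith_iff_dist_le_mul]
  intro x hx y hy
  have hd0 : (0:ℝ) ≤ dist x y := dist_nonneg
  rcases lt_or_ge (dist x y) δ with h | h
  · obtain ⟨i, hball⟩ := hleb x hx
    have hxU : x ∈ U i := interior_subset (hball (mem_ball_self hδ))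
    have hyU : y ∈ U i := interior_subset (hball (by rwa [mem_ball, dist_comm]))
    have h1 : dist (f x) (f y) ≤ (K i) * dist x y :=
      (lipschitzOnWith_iff_dist_le_mul.1 (hlip i)) x hxU y hyU
    have h2 : (K i : ℝ) ≤ Km := by
      exact_mod_cast NNReal.coe_le_coe.2 (Finset.le_sup i.2)
    calc dist (f x) (f y) ≤ (K i) * dist x y := h1
      _ ≤ ((Km + Real.toNNReal (D / δ) : ℝ≥0) : ℝ) * dist x y := by
          apply mul_le_mul_of_nonneg_right _ hd0
          push_cast
          have : (0:ℝ) ≤ Real.toNNReal (D / δ) := (Real.toNNReal (D / δ)).coe_nonneg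
          linarith
  · have hDδ : (0:ℝ) ≤ D / δ := div_nonneg (le_max_right _ _) hδ.le
    calc dist (f x) (f y) ≤ D := hDist x hx y hy
      _ = D / δ * δ := by field_simp
      _ ≤ D / δ * dist x y := mul_le_mul_of_nonneg_left h hDδ
      _ ≤ ((Km + Real.toNNReal (D / δ) : ℝ≥0) : ℝ) * dist x y := by
          apply mul_le_mul_of_nonneg_right _ hd0
          push_cast
          rw [Real.coe_toNNReal _ hDδ]
          have : (0:ℝ) ≤ Km := Km.coe_nonneg
          linarith

private def cl15 (x : ℝ) : ℝ := max 0 (min x 1)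

private lemma cl15_nonneg (x : ℝ) : 0 ≤ cl15 x := le_max_left _ _

private lemma cl15_le_one (x : ℝ) : cl15 x ≤ 1 :=
  max_le zero_le_one (min_le_right _ _)

private lemma cl15_lip (x y : ℝ) : |cl15 x - cl15 y| ≤ |x - y| := by
  unfold cl15
  rw [max_comm 0 (min x 1), max_comm 0 (min y 1)]
  refine (abs_max_sub_max_le_abs _ _ _).trans ?_
  refine (abs_min_sub_min_le_max x 1 y 1).trans ?_
  simp

private lemma cl15_eq {x : ℝ} (h0 : 0 ≤ x) (h1 : x ≤ 1) : cl15 x = x := by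
  unfold cl15
  rw [min_eq_left h1, max_eq_right h0]

private lemma abs_mul_sub15 (x y u v : ℝ) : |x * u - y * v| ≤ |x - y| * |u| + |y| * |u - v| := by
  have h : x * u - y * v = (x - y) * u + y * (u - v) := by ring
  rw [h]
  refine (abs_add_le _ _).trans ?_
  rw [abs_mul, abs_mul]

private noncomputable def FF15 {S N : ℕ} (Q : (Fin S → ℝ) → Matrix (Fin S) (Fin S) ℝ)
    (a : Fin N → Fin N → ℝ) (Davg : ℝ) (z : Fin N → Fin S → ℝ) : Fin N → Fin S → ℝ :=
  fun i s => ∑ k : Fin S, Q (fun r => (1 / Davg) * ∑ j : Fin N, a i j * z j r) s k * z i k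

private noncomputable def GG15 {S N : ℕ} (Q : (Fin S → ℝ) → Matrix (Fin S) (Fin S) ℝ)
    (a : Fin N → Fin N → ℝ) (Davg : ℝ) (z : Fin N → Fin S → ℝ) : Fin N → Fin S → ℝ :=
  FF15 Q a Davg (fun i s => cl15 (z i s))

private lemma mem_nhdsWithin_Ici_Icc15 {a b u t : ℝ} (hau : a ≤ u) (hut : u ≤ t) (htb : t < b) :
    Icc a b ∈ nhdsWithin t (Ici u) :=
  mem_nhdsWithin.2 ⟨Iio b, isOpen_Iio, htb,
    fun _ hx => ⟨hau.trans hx.2, le_of_lt hx.1⟩⟩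

private lemma FF15_bound {S N : ℕ} {Q : (Fin S → ℝ) → Matrix (Fin S) (Fin S) ℝ}
    (hQlip : ∀ k s, LocallyLipschitz fun φ => Q φ k s)
    (a : Fin N → Fin N → ℝ) (Davg : ℝ) (R : ℝ) (hR : 0 ≤ R) :
    ∃ (K : ℝ≥0) (C : ℝ), 0 ≤ C ∧
      LipschitzOnWith K (FF15 Q a Davg) (closedBall 0 R) ∧
      ∀ z ∈ closedBall (0 : Fin N → Fin S → ℝ) R, ‖FF15 Q a Davg z‖ ≤ C := by
  classical
  set c : ℝ := |1 / Davg| * (∑ i : Fin N, ∑ j : Fin N, |a i j|) + 1 with hc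
  have hsum_nonneg : 0 ≤ ∑ i : Fin N, ∑ j : Fin N, |a i j| :=
    Finset.sum_nonneg fun i _ => Finset.sum_nonneg fun j _ => abs_nonneg _
  have hc0 : 0 ≤ c := by positivity
  have hA : ∀ i : Fin N, |1 / Davg| * ∑ j : Fin N, |a i j| ≤ c := by
    intro i
    have h1 : ∑ j : Fin N, |a i j| ≤ ∑ i : Fin N, ∑ j : Fin N, |a i j| :=
      Finset.single_le_sum (f := fun i => ∑ j : Fin N, |a i j|)
        (fun i _ => Finset.sum_nonneg fun j _ => abs_nonneg _) (Finset.mem_univ i)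
    nlinarith [abs_nonneg (1 / Davg)]
  set ρ : Fin N → (Fin N → Fin S → ℝ) → (Fin S → ℝ) :=
    fun i z r => (1 / Davg) * ∑ j : Fin N, a i j * z j r with hρ
  have hρ_lip : ∀ (i : Fin N) (z w : Fin N → Fin S → ℝ),
      dist (ρ i z) (ρ i w) ≤ c * dist z w := by
    intro i z w
    rw [dist_pi_le_iff (mul_nonneg hc0 dist_nonneg)]
    intro r
    rw [Real.dist_eq]
    have h1 : ρ i z r - ρ i w r = (1 / Davg) * ∑ j : Fin N, a i j * (z j r - w j r) := by
      simp only [hρ, mul_sub, Finset.sum_sub_distrib, mul_sub]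
    rw [h1, abs_mul]
    have h2 : |∑ j : Fin N, a i j * (z j r - w j r)| ≤ (∑ j : Fin N, |a i j|) * dist z w := by
      refine (Finset.abs_sum_le_sum_abs _ _).trans ?_
      rw [Finset.sum_mul]
      refine Finset.sum_le_sum fun j _ => ?_
      rw [abs_mul]
      refine mul_le_mul_of_nonneg_left ?_ (abs_nonneg _)
      calc |z j r - w j r| = dist (z j r) (w j r) := (Real.dist_eq _ _).symm
        _ ≤ dist (z j) (w j) := dist_le_pi_dist _ _ _
        _ ≤ dist z w := dist_le_pi_dist _ _ _
    calc |1 / Davg| * |∑ j : Fin N, a i j * (z j r - w j r)|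
        ≤ |1 / Davg| * ((∑ j : Fin N, |a i j|) * dist z w) :=
          mul_le_mul_of_nonneg_left h2 (abs_nonneg _)
      _ = (|1 / Davg| * ∑ j : Fin N, |a i j|) * dist z w := by ring
      _ ≤ c * dist z w := mul_le_mul_of_nonneg_right (hA i) dist_nonneg
  have hρ0 : ∀ i : Fin N, ρ i 0 = (fun _ => 0 : Fin S → ℝ) := by
    intro i; funext r; simp [hρ]
  set Φ : Set (Fin S → ℝ) := Set.pi Set.univ (fun _ : Fin S => Icc (-(c * R)) (c * R)) with hΦ
  have hΦc : IsCompact Φ := isCompact_univ_pi fun _ => isCompact_Icc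
  have hρ_mem : ∀ (i : Fin N), ∀ z ∈ closedBall (0 : Fin N → Fin S → ℝ) R, ρ i z ∈ Φ := by
    intro i z hz
    intro r _
    have h1 : dist (ρ i z) (ρ i 0) ≤ c * dist z 0 := hρ_lip i z 0
    have h2 : dist z 0 ≤ R := mem_closedBall.1 hz
    have h3 : |ρ i z r| ≤ c * R := by
      calc |ρ i z r| = dist (ρ i z r) (ρ i 0 r) := by
            rw [hρ0 i, Real.dist_eq, sub_zero]
        _ ≤ dist (ρ i z) (ρ i 0) := dist_le_pi_dist _ _ _
        _ ≤ c * dist z 0 := h1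
        _ ≤ c * R := mul_le_mul_of_nonneg_left h2 hc0
    exact abs_le.1 h3
  have hK : ∀ p : Fin S × Fin S, ∃ K : ℝ≥0, LipschitzOnWith K (fun φ => Q φ p.1 p.2) Φ :=
    fun p => locLip_lipschitzOnWith_of_isCompact15 (hQlip p.1 p.2) hΦc
  choose Kq hKq using hK
  have hB : ∀ p : Fin S × Fin S, ∃ B : ℝ, ∀ φ ∈ Φ, ‖Q φ p.1 p.2‖ ≤ B :=
    fun p => hΦc.exists_bound_of_continuousOn ((hQlip p.1 p.2).continuous.continuousOn)
  choose Bq hBq using hB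
  set KQ : ℝ := ∑ p : Fin S × Fin S, (Kq p : ℝ) with hKQ
  set BQ : ℝ := ∑ p : Fin S × Fin S, |Bq p| with hBQ
  have hKQ0 : 0 ≤ KQ := Finset.sum_nonneg fun p _ => (Kq p).coe_nonneg
  have hBQ0 : 0 ≤ BQ := Finset.sum_nonneg fun p _ => abs_nonneg _
  have hKQp : ∀ p : Fin S × Fin S, (Kq p : ℝ) ≤ KQ :=
    fun p => Finset.single_le_sum (f := fun p : Fin S × Fin S => (Kq p : ℝ))
      (fun q _ => (Kq q).coe_nonneg) (Finset.mem_univ p)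
  have hBQp : ∀ (s k : Fin S), ∀ φ ∈ Φ, |Q φ s k| ≤ BQ := by
    intro s k φ hφ
    have h1 : |Q φ s k| ≤ Bq (s, k) := by
      have := hBq (s, k) φ hφ
      simpa [Real.norm_eq_abs] using this
    refine h1.trans ((le_abs_self _).trans ?_)
    exact Finset.single_le_sum (f := fun p : Fin S × Fin S => |Bq p|)
      (fun q _ => abs_nonneg _) (Finset.mem_univ (s, k))
  have hQd : ∀ (s k : Fin S), ∀ φ ∈ Φ, ∀ ψ ∈ Φ,
      |Q φ s k - Q ψ s k| ≤ KQ * dist φ ψ := by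
    intro s k φ hφ ψ hψ
    have h1 := (lipschitzOnWith_iff_dist_le_mul.1 (hKq (s, k))) φ hφ ψ hψ
    rw [Real.dist_eq] at h1
    exact h1.trans (mul_le_mul_of_nonneg_right (hKQp (s, k)) dist_nonneg)
  set L : ℝ := (S : ℝ) * (KQ * c * R + BQ) with hL
  have hL0 : 0 ≤ L := by positivity
  set C : ℝ := (S : ℝ) * (BQ * R) with hC
  have hC0 : 0 ≤ C := by positivity
  refine ⟨Real.toNNReal L, C, hC0, ?_, ?_⟩
  · rw [lipschitzOnWith_iff_dist_le_mul]
    intro z hz w hw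
    rw [Real.coe_toNNReal _ hL0]
    have hd0 : (0 : ℝ) ≤ dist z w := dist_nonneg
    rw [dist_pi_le_iff (mul_nonneg hL0 hd0)]
    intro i
    rw [dist_pi_le_iff (mul_nonneg hL0 hd0)]
    intro s
    rw [Real.dist_eq]
    have hzR : ∀ k, |z i k| ≤ R := by
      intro k
      calc |z i k| = dist (z i k) 0 := by rw [Real.dist_eq, sub_zero]
        _ ≤ dist (z i) 0 := dist_le_pi_dist (z i) 0 k
        _ ≤ dist z 0 := dist_le_pi_dist z 0 i
        _ ≤ R := mem_closedBall.1 hz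
    have key : ∀ k : Fin S,
        |Q (ρ i z) s k * z i k - Q (ρ i w) s k * w i k| ≤ (KQ * c * R + BQ) * dist z w := by
      intro k
      refine (abs_mul_sub15 _ _ _ _).trans ?_
      have h1 : |Q (ρ i z) s k - Q (ρ i w) s k| ≤ KQ * (c * dist z w) := by
        refine (hQd s k _ (hρ_mem i z hz) _ (hρ_mem i w hw)).trans ?_
        exact mul_le_mul_of_nonneg_left (hρ_lip i z w) hKQ0
      have h2 : |z i k - w i k| ≤ dist z w := by
        calc |z i k - w i k| = dist (z i k) (w i k) := (Real.dist_eq _ _).symm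
          _ ≤ dist (z i) (w i) := dist_le_pi_dist _ _ _
          _ ≤ dist z w := dist_le_pi_dist _ _ _
      have h3 : |Q (ρ i w) s k| ≤ BQ := hBQp s k _ (hρ_mem i w hw)
      have h4 : |Q (ρ i z) s k - Q (ρ i w) s k| * |z i k| ≤ KQ * (c * dist z w) * R :=
        mul_le_mul h1 (hzR k) (abs_nonneg _) (by positivity)
      have h5 : |Q (ρ i w) s k| * |z i k - w i k| ≤ BQ * dist z w :=
        mul_le_mul h3 h2 (abs_nonneg _) hBQ0
      nlinarith
    calc |FF15 Q a Davg z i s - FF15 Q a Davg w i s|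
        = |∑ k : Fin S, (Q (ρ i z) s k * z i k - Q (ρ i w) s k * w i k)| := by
          simp only [FF15, hρ, Finset.sum_sub_distrib]
      _ ≤ ∑ k : Fin S, |Q (ρ i z) s k * z i k - Q (ρ i w) s k * w i k| :=
          Finset.abs_sum_le_sum_abs _ _
      _ ≤ ∑ _k : Fin S, (KQ * c * R + BQ) * dist z w := Finset.sum_le_sum fun k _ => key k
      _ = L * dist z w := by
          rw [Finset.sum_const, Finset.card_univ, Fintype.card_fin, nsmul_eq_mul, hL]; ring
  · intro z hz
    rw [pi_norm_le_iff_of_nonneg hC0]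
    intro i
    rw [pi_norm_le_iff_of_nonneg hC0]
    intro s
    rw [Real.norm_eq_abs]
    have hzR : ∀ k, |z i k| ≤ R := by
      intro k
      calc |z i k| = dist (z i k) 0 := by rw [Real.dist_eq, sub_zero]
        _ ≤ dist (z i) 0 := dist_le_pi_dist (z i) 0 k
        _ ≤ dist z 0 := dist_le_pi_dist z 0 i
        _ ≤ R := mem_closedBall.1 hz
    calc |FF15 Q a Davg z i s| ≤ ∑ k : Fin S, |Q (ρ i z) s k * z i k| := by
          simpa only [FF15] using Finset.abs_sum_le_sum_abs
            (fun k => Q (ρ i z) s k * z i k) Finset.univ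
      _ ≤ ∑ _k : Fin S, BQ * R := by
          refine Finset.sum_le_sum fun k _ => ?_
          rw [abs_mul]
          exact mul_le_mul (hBQp s k _ (hρ_mem i z hz)) (hzR k) (abs_nonneg _) hBQ0
      _ = C := by
          rw [Finset.sum_const, Finset.card_univ, Fintype.card_fin, nsmul_eq_mul, hC]

end Aux15

/-- The probability simplex in `ℝ^S`. -/
def stdSimplex15 (S : ℕ) : Set (Fin S → ℝ) :=
  {v | (∀ s, 0 ≤ v s) ∧ ∑ s : Fin S, v s = 1}

/-- for the NIMFA system `ż_i = Q(ρ_i) z_i`,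
`ρ_i = (1/⟨d⟩) ∑_j a_{ij} z_j`, with locally Lipschitz rate matrices (nonnegative
off-diagonal entries, zero column sums on the relevant domain), initial conditions in the
simplex yield a global solution, unique on `[0,∞)`, which stays in the simplex. -/
theorem stmt15 (S N : ℕ)
    (Q : (Fin S → ℝ) → Matrix (Fin S) (Fin S) ℝ)
    (hQlip : ∀ k s, LocallyLipschitz fun φ => Q φ k s)
    (hQpos : ∀ φ : Fin S → ℝ, (∀ r, 0 ≤ φ r) → ∀ k s, k ≠ s → 0 ≤ Q φ k s)
    (hQsum : ∀ φ : Fin S → ℝ, (∀ r, 0 ≤ φ r) → ∀ s, ∑ k : Fin S, Q φ k s = 0)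
    (a : Fin N → Fin N → ℝ) (ha : ∀ i j, 0 ≤ a i j) (Davg : ℝ) (hD : 0 < Davg)
    (z0 : Fin N → Fin S → ℝ) (hz0 : ∀ i, z0 i ∈ stdSimplex15 S) :
    ∃ z : Fin N → ℝ → Fin S → ℝ,
      ((∀ i, z i 0 = z0 i) ∧
        ∀ i, ∀ t : ℝ, 0 ≤ t → HasDerivWithinAt (z i)
          (fun s => ∑ k : Fin S,
            Q (fun r => (1 / Davg) * ∑ j : Fin N, a i j * z j t r) s k * z i t k)
          (Set.Ici 0) t) ∧
      (∀ i, ∀ t : ℝ, 0 ≤ t → z i t ∈ stdSimplex15 S) ∧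
      (∀ z' : Fin N → ℝ → Fin S → ℝ,
        ((∀ i, z' i 0 = z0 i) ∧
          ∀ i, ∀ t : ℝ, 0 ≤ t → HasDerivWithinAt (z' i)
            (fun s => ∑ k : Fin S,
              Q (fun r => (1 / Davg) * ∑ j : Fin N, a i j * z' j t r) s k * z' i t k)
            (Set.Ici 0) t) →
        ∀ i, ∀ t : ℝ, 0 ≤ t → z' i t = z i t) := by
  classical
  open Set Metric in
  obtain ⟨K₁, C₁, hC₁0, hlip₁, hbd₁⟩ := FF15_bound hQlip a Davg 1 zero_le_one
  set GG : (Fin N → Fin S → ℝ) → (Fin N → Fin S → ℝ) := GG15 Q a Davg with hGGdef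
  have hclE_mem : ∀ z : Fin N → Fin S → ℝ,
      (fun i s => cl15 (z i s)) ∈ closedBall (0 : Fin N → Fin S → ℝ) 1 := by
    intro z
    rw [mem_closedBall_zero_iff, pi_norm_le_iff_of_nonneg zero_le_one]
    intro i
    rw [pi_norm_le_iff_of_nonneg zero_le_one]
    intro s
    rw [Real.norm_eq_abs, abs_le]
    exact ⟨by linarith [cl15_nonneg (z i s)], cl15_le_one _⟩
  have hclE_lip : ∀ z w : Fin N → Fin S → ℝ,
      dist (fun i s => cl15 (z i s)) (fun i s => cl15 (w i s)) ≤ dist z w := by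
    intro z w
    rw [dist_pi_le_iff dist_nonneg]
    intro i
    rw [dist_pi_le_iff dist_nonneg]
    intro s
    rw [Real.dist_eq]
    refine (cl15_lip _ _).trans ?_
    calc |z i s - w i s| = dist (z i s) (w i s) := (Real.dist_eq _ _).symm
      _ ≤ dist (z i) (w i) := dist_le_pi_dist _ _ _
      _ ≤ dist z w := dist_le_pi_dist _ _ _
  have hGlip : LipschitzWith K₁ GG := by
    rw [lipschitzWith_iff_dist_le_mul]
    intro z w
    calc dist (GG z) (GG w)
        = dist (FF15 Q a Davg (fun i s => cl15 (z i s))) (FF15 Q a Davg (fun i s => cl15 (w i s))) := rfl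
      _ ≤ K₁ * dist (fun i s => cl15 (z i s)) (fun i s => cl15 (w i s)) :=
          (lipschitzOnWith_iff_dist_le_mul.1 hlip₁) _ (hclE_mem z) _ (hclE_mem w)
      _ ≤ K₁ * dist z w := mul_le_mul_of_nonneg_left (hclE_lip z w) K₁.coe_nonneg
  have hGbd : ∀ z, ‖GG z‖ ≤ C₁ := fun z => hbd₁ _ (hclE_mem z)
  -- local solutions on [0, n]
  have hex : ∀ n : ℕ, ∃ f : ℝ → (Fin N → Fin S → ℝ), f 0 = z0 ∧
      ∀ t ∈ Icc (0:ℝ) n, HasDerivWithinAt f (GG (f t)) (Icc (0:ℝ) n) t := by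
    intro n
    have hpl : IsPicardLindelof (fun _ x => GG x) (tmin := 0) (tmax := n)
        ⟨0, le_refl 0, n.cast_nonneg⟩ z0 (C₁.toNNReal * n) 0 C₁.toNNReal K₁ :=
      { lipschitzOnWith := fun _ _ => hGlip.lipschitzOnWith
        continuousOn := fun _ _ => continuousOn_const
        norm_le := fun _ _ x _ => by rw [Real.coe_toNNReal _ hC₁0]; exact hGbd x
        mul_max_le := by simp [Real.coe_toNNReal _ hC₁0, n.cast_nonneg] }
    exact hpl.exists_eq_forall_mem_Icc_hasDerivWithinAt₀
  choose sol hsol0 hsolderiv using hex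
  have hsolcont : ∀ n : ℕ, ContinuousOn (sol n) (Icc (0:ℝ) n) :=
    fun n t ht => (hsolderiv n t ht).continuousWithinAt
  have hsolIci : ∀ (n : ℕ) (t : ℝ), 0 ≤ t → t < n →
      HasDerivWithinAt (sol n) (GG (sol n t)) (Ici t) t := fun n t h0 hn =>
    (hsolderiv n t ⟨h0, hn.le⟩).mono_of_mem_nhdsWithin (mem_nhdsWithin_Ici_Icc15 h0 le_rfl hn)
  have hcons : ∀ (n m : ℕ) (t : ℝ), t ∈ Icc 0 (min (n:ℝ) m) → sol n t = sol m t := by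
    intro n m t ht
    refine ODE_solution_unique (v := fun _ x => GG x) (fun _ => hGlip)
      ((hsolcont n).mono (Icc_subset_Icc le_rfl (min_le_left _ _)))
      (fun u hu => hsolIci n u hu.1 (lt_of_lt_of_le hu.2 (min_le_left _ _)))
      ((hsolcont m).mono (Icc_subset_Icc le_rfl (min_le_right _ _)))
      (fun u hu => hsolIci m u hu.1 (lt_of_lt_of_le hu.2 (min_le_right _ _)))
      (by rw [hsol0 n, hsol0 m]) ht
  set Z : ℝ → (Fin N → Fin S → ℝ) := fun t => sol (⌈t⌉₊ + 1) t with hZdef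
  have hlt : ∀ t : ℝ, 0 ≤ t → t < ((⌈t⌉₊ + 1 : ℕ) : ℝ) := by
    intro t _
    have := Nat.le_ceil t
    push_cast
    linarith
  have hZn : ∀ (n : ℕ) (t : ℝ), t ∈ Icc (0:ℝ) n → Z t = sol n t := by
    intro n t ht
    exact hcons _ n t ⟨ht.1, le_min (hlt t ht.1).le ht.2⟩
  have hZ0 : Z 0 = z0 := hsol0 _
  have hZderiv : ∀ t : ℝ, 0 ≤ t → HasDerivWithinAt Z (GG (Z t)) (Ici 0) t := by
    intro t ht
    set n : ℕ := ⌈t⌉₊ + 1 with hn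
    have htn : t < (n:ℝ) := hlt t ht
    have h1 : HasDerivWithinAt (sol n) (GG (sol n t)) (Ici 0) t :=
      (hsolderiv n t ⟨ht, htn.le⟩).mono_of_mem_nhdsWithin
        (mem_nhdsWithin_Ici_Icc15 le_rfl ht htn)
    have heq : Z =ᶠ[nhdsWithin t (Ici 0)] sol n :=
      Filter.eventuallyEq_of_mem (mem_nhdsWithin_Ici_Icc15 le_rfl ht htn)
        (fun x hx => hZn n x hx)
    have hZt : Z t = sol n t := hZn n t ⟨ht, htn.le⟩
    have h2 := h1.congr_of_eventuallyEq heq hZt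
    rwa [← hZt] at h2
  have hZi : ∀ (i : Fin N) (t : ℝ), 0 ≤ t →
      HasDerivWithinAt (fun u => Z u i) (GG (Z t) i) (Ici 0) t :=
    fun i t ht => (hasDerivWithinAt_pi.1 (hZderiv t ht)) i
  have hZis : ∀ (i : Fin N) (s : Fin S) (t : ℝ), 0 ≤ t →
      HasDerivWithinAt (fun u => Z u i s) (GG (Z t) i s) (Ici 0) t :=
    fun i s t ht => (hasDerivWithinAt_pi.1 (hZi i t ht)) s
  have hφ : ∀ (z : Fin N → Fin S → ℝ) (i : Fin N) (r : Fin S),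
      0 ≤ (1 / Davg) * ∑ j : Fin N, a i j * cl15 (z j r) :=
    fun z i r => mul_nonneg (one_div_pos.2 hD).le
      (Finset.sum_nonneg fun j _ => mul_nonneg (ha i j) (cl15_nonneg _))
  have hGsum : ∀ (z : Fin N → Fin S → ℝ) (i : Fin N), ∑ s : Fin S, GG z i s = 0 := by
    intro z i
    have h1 : ∑ s : Fin S, GG z i s
        = ∑ k : Fin S, (∑ s : Fin S,
            Q (fun r => (1 / Davg) * ∑ j : Fin N, a i j * cl15 (z j r)) s k) * cl15 (z i k) := by
      simp only [hGGdef, GG15, FF15]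
      rw [Finset.sum_comm]
      exact Finset.sum_congr rfl fun k _ => (Finset.sum_mul _ _ _).symm
    rw [h1]
    have h2 : ∀ k : Fin S, (∑ s : Fin S,
        Q (fun r => (1 / Davg) * ∑ j : Fin N, a i j * cl15 (z j r)) s k) = 0 :=
      hQsum _ (hφ z i)
    refine Finset.sum_eq_zero fun k _ => ?_
    rw [h2 k, zero_mul]
  have hsum1 : ∀ (i : Fin N) (t : ℝ), 0 ≤ t → ∑ s : Fin S, Z t i s = 1 := by
    intro i t ht
    set g : ℝ → ℝ := fun u => ∑ s : Fin S, Z u i s with hgdef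
    have hg' : ∀ u : ℝ, 0 ≤ u → HasDerivWithinAt g 0 (Ici 0) u := by
      intro u hu
      have h1 : HasDerivWithinAt g (∑ s : Fin S, GG (Z u) i s) (Ici 0) u :=
        HasDerivWithinAt.fun_sum fun s _ => hZis i s u hu
      rwa [hGsum (Z u) i] at h1
    have hgc : ContinuousOn g (Icc 0 t) :=
      fun u hu => ((hg' u hu.1).continuousWithinAt).mono Icc_subset_Ici_self
    have hg0 : g 0 = 1 := by
      show ∑ s : Fin S, Z 0 i s = 1
      rw [hZ0]
      exact (hz0 i).2
    have hup : ∀ x ∈ Icc (0:ℝ) t, g x ≤ 1 := by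
      intro x hx
      refine image_le_of_deriv_right_le_deriv_boundary (f' := fun _ => (0:ℝ))
        (B := fun _ => (1:ℝ)) (B' := fun _ => (0:ℝ)) hgc
        (fun u hu => (hg' u hu.1).mono (Ici_subset_Ici.2 hu.1)) hg0.le continuousOn_const
        (fun u _ => hasDerivWithinAt_const u _ 1) (fun u _ => le_rfl) hx
    have hlo : ∀ x ∈ Icc (0:ℝ) t, (1:ℝ) ≤ g x := by
      intro x hx
      refine image_le_of_deriv_right_le_deriv_boundary (f := fun _ => (1:ℝ))
        (f' := fun _ => (0:ℝ)) (B := g) (B' := fun _ => (0:ℝ)) continuousOn_const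
        (fun u _ => hasDerivWithinAt_const u _ 1) hg0.ge hgc
        (fun u hu => (hg' u hu.1).mono (Ici_subset_Ici.2 hu.1)) (fun u _ => le_rfl) hx
    exact le_antisymm (hup t ⟨ht, le_rfl⟩) (hlo t ⟨ht, le_rfl⟩)
  have hnn : ∀ (i : Fin N) (s : Fin S) (t : ℝ), 0 ≤ t → 0 ≤ Z t i s := by
    intro i s t ht
    have key : ∀ ε : ℝ, 0 < ε → -(Z t i s) ≤ ε * (1 + t) := by
      intro ε hε
      have hB : ∀ x : ℝ, HasDerivAt (fun u => ε * (1 + u)) ε x := by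
        intro x
        simpa using (HasDerivAt.const_add (1:ℝ) (hasDerivAt_id x)).const_mul ε
      have hall : ∀ x ∈ Icc (0:ℝ) t, -(Z x i s) ≤ ε * (1 + x) := by
        refine image_le_of_deriv_right_lt_deriv_boundary
          (f := fun u => -(Z u i s)) (f' := fun u => -(GG (Z u) i s)) (a := 0) (b := t)
          (B := fun u => ε * (1 + u)) (B' := fun _ => ε) ?_ ?_ ?_ hB ?_
        · exact fun u hu =>
            (((hZis i s u hu.1).continuousWithinAt).mono Icc_subset_Ici_self).neg
        · exact fun x hx => ((hZis i s x hx.1).mono (Ici_subset_Ici.2 hx.1)).neg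
        · show -(Z 0 i s) ≤ ε * (1 + 0)
          have h2 : 0 ≤ z0 i s := (hz0 i).1 s
          have h1 : Z 0 i s = z0 i s := by rw [hZ0]
          rw [h1]
          nlinarith
        · intro x hx hfB
          have hfB' : -(Z x i s) = ε * (1 + x) := hfB
          show -(GG (Z x) i s) < ε
          have hx0 : (0:ℝ) ≤ x := hx.1
          have hpos : 0 < ε * (1 + x) := by nlinarith
          have hneg : Z x i s < 0 := by nlinarith [hfB']
          have hcl : cl15 (Z x i s) = 0 := by
            unfold cl15
            rw [min_eq_left (by linarith : Z x i s ≤ 1), max_eq_left (by linarith)]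
          have hG0 : 0 ≤ GG (Z x) i s := by
            show 0 ≤ ∑ k : Fin S,
              Q (fun r => (1 / Davg) * ∑ j : Fin N, a i j * cl15 (Z x j r)) s k * cl15 (Z x i k)
            refine Finset.sum_nonneg fun k _ => ?_
            rcases eq_or_ne k s with hk | hk
            · rw [hk, hcl, mul_zero]
            · exact mul_nonneg (hQpos _ (hφ (Z x) i) s k (Ne.symm hk)) (cl15_nonneg _)
          linarith
      have := hall t ⟨ht, le_rfl⟩
      exact this
    by_contra hcon
    push_neg at hcon
    have h1t : (0:ℝ) < 1 + t := by linarith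
    have hε : 0 < -(Z t i s) / (2 * (1 + t)) := div_pos (by linarith) (by linarith)
    have h2 := key _ hε
    have heq2 : -(Z t i s) / (2 * (1 + t)) * (1 + t) = -(Z t i s) / 2 := by
      field_simp
    rw [heq2] at h2
    linarith
  have hmem : ∀ (t : ℝ), 0 ≤ t → ∀ i, Z t i ∈ stdSimplex15 S :=
    fun t ht i => ⟨fun s => hnn i s t ht, hsum1 i t ht⟩
  have hle1 : ∀ (t : ℝ), 0 ≤ t → ∀ i s, Z t i s ≤ 1 := by
    intro t ht i s
    have h1 := hsum1 i t ht
    have h2 : Z t i s ≤ ∑ k : Fin S, Z t i k :=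
      Finset.single_le_sum (f := fun k => Z t i k) (fun k _ => hnn i k t ht)
        (Finset.mem_univ s)
    linarith
  have hclZ : ∀ (t : ℝ), 0 ≤ t → (fun i s => cl15 (Z t i s)) = Z t := by
    intro t ht
    funext i s
    exact cl15_eq (hnn i s t ht) (hle1 t ht i s)
  have hGmatch : ∀ (t : ℝ), 0 ≤ t → GG (Z t) = FF15 Q a Davg (Z t) := by
    intro t ht
    show FF15 Q a Davg (fun i s => cl15 (Z t i s)) = _
    rw [hclZ t ht]
  refine ⟨fun i t => Z t i, ⟨fun i => congrFun hZ0 i, ?_⟩, fun i t ht => hmem t ht i, ?_⟩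
  · intro i t ht
    have h1 := hZi i t ht
    rw [hGmatch t ht] at h1
    exact h1
  · rintro z' ⟨hz'0, hz'd⟩ i t ht
    set W : ℝ → (Fin N → Fin S → ℝ) := fun u j => z' j u with hWdef
    have hWd : ∀ u : ℝ, 0 ≤ u → HasDerivWithinAt W (FF15 Q a Davg (W u)) (Ici 0) u :=
      fun u hu => hasDerivWithinAt_pi.2 fun j => hz'd j u hu
    have hZd : ∀ u : ℝ, 0 ≤ u → HasDerivWithinAt Z (FF15 Q a Davg (Z u)) (Ici 0) u := by
      intro u hu
      have h1 := hZderiv u hu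
      rwa [hGmatch u hu] at h1
    have hWc : ContinuousOn W (Icc 0 t) :=
      fun u hu => ((hWd u hu.1).continuousWithinAt).mono Icc_subset_Ici_self
    have hZc : ContinuousOn Z (Icc 0 t) :=
      fun u hu => ((hZd u hu.1).continuousWithinAt).mono Icc_subset_Ici_self
    have hSTc : IsCompact ((W '' Icc 0 t) ∪ (Z '' Icc 0 t)) :=
      (isCompact_Icc.image_of_continuousOn hWc).union
        (isCompact_Icc.image_of_continuousOn hZc)
    obtain ⟨R, hR0, hRsub⟩ := hSTc.isBounded.subset_closedBall_lt 0 0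
    obtain ⟨K₂, C₂, _, hlip₂, _⟩ := FF15_bound hQlip a Davg R hR0.le
    have huniq : Set.EqOn W Z (Icc 0 t) := by
      refine ODE_solution_unique_of_mem_Icc_right (v := fun _ x => FF15 Q a Davg x)
        (s := fun _ => (W '' Icc 0 t) ∪ (Z '' Icc 0 t)) (K := K₂)
        (fun _ _ => hlip₂.mono hRsub) hWc
        (fun u hu => (hWd u hu.1).mono (Ici_subset_Ici.2 hu.1))
        (fun u hu => Or.inl ⟨u, ⟨hu.1, hu.2.le⟩, rfl⟩) hZc
        (fun u hu => (hZd u hu.1).mono (Ici_subset_Ici.2 hu.1))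
        (fun u hu => Or.inr ⟨u, ⟨hu.1, hu.2.le⟩, rfl⟩) ?_
      funext j
      rw [hZ0]
      exact hz'0 j
    exact congrFun (huniq ⟨ht, le_rfl⟩) i
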